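/- With the notation of the previous lemma, for every δ > 0 there exists C = C(d,δ) ≥ 1 such that for all t ∈ [d/2+δ, 1/δ], all q ≥ 0, and all m ∈ B_q^d with m ≠ 0, one has C^{-1} 2^{-2qt} ≤ M_q^t(m) − |m|^{-2t} ≤ C 2^{-2qt}. -/

import Mathlib

open scoped BigOperators

/-- Euclidean norm of a lattice point `m ∈ ℤ^d`. -/
noncomputable def _root_.enorm {d : ℕ} (m : Fin d → ℤ) : ℝ :=
  Real.sqrt (∑ i, ((m i : ℝ))^2)

/-- `M_q^t(m) = Σ_{β ∈ ℤ^d} |m + 2^q β|^{-2t}`; terms with `m + 2^q β = 0` vanish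
since `0^{-2t} = 0` for the real power with `-2t ≠ 0`, which encodes the omission
of the `β`-term producing `0` in the definition from the paper. -/
noncomputable def Mq (d q : ℕ) (t : ℝ) (m : Fin d → ℤ) : ℝ :=
  ∑' β : Fin d → ℤ, _root_.enorm (fun i => m i + 2^q * β i) ^ (-(2*t))

/-- The box `B_q^d = [-2^{q-1}, 2^{q-1}-1]^d ⊂ ℤ^d`. -/
noncomputable def Bqset (d q : ℕ) : Finset (Fin d → ℤ) :=
  Fintype.piFinset (fun _ => Finset.Icc (-(2:ℤ)^(q-1)) ((2:ℤ)^(q-1) - 1))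

set_option maxHeartbeats 1000000

section helpers

lemma enorm_nonneg' {d : ℕ} (m : Fin d → ℤ) : 0 ≤ _root_.enorm m := Real.sqrt_nonneg _

lemma coord_le_enorm {d : ℕ} (m : Fin d → ℤ) (i : Fin d) : |(m i : ℝ)| ≤ _root_.enorm m := by
  rw [_root_.enorm, ← Real.sqrt_sq_eq_abs]
  exact Real.sqrt_le_sqrt (Finset.single_le_sum (f := fun j => ((m j : ℝ))^2)
    (fun j _ => sq_nonneg _) (Finset.mem_univ i))

lemma one_le_enorm {d : ℕ} {m : Fin d → ℤ} (hm : m ≠ 0) : 1 ≤ _root_.enorm m := by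
  obtain ⟨i, hi⟩ : ∃ i, m i ≠ 0 := by
    by_contra h; push_neg at h; exact hm (funext h)
  calc (1:ℝ) ≤ |(m i : ℝ)| := by
        rw [← Int.cast_abs]; exact_mod_cast Int.one_le_abs hi
    _ ≤ _root_.enorm m := coord_le_enorm m i

lemma lattice_enorm_pos {d : ℕ} {m : Fin d → ℤ} (hm : m ≠ 0) : 0 < _root_.enorm m :=
  lt_of_lt_of_le one_pos (one_le_enorm hm)

lemma enorm_le_of_bound {d : ℕ} (v : Fin d → ℤ) (M : ℝ) (hM : 0 ≤ M)
    (h : ∀ i, |(v i : ℝ)| ≤ M) : _root_.enorm v ≤ Real.sqrt d * M := by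
  rw [_root_.enorm]
  have h1 : ∑ i, ((v i : ℝ))^2 ≤ (d : ℝ) * M^2 := by
    calc ∑ i, ((v i : ℝ))^2 ≤ ∑ _i : Fin d, M^2 :=
          Finset.sum_le_sum (fun i _ => by
            have hi := h i
            nlinarith [abs_nonneg ((v i : ℝ)), sq_abs ((v i : ℝ))])
      _ = (d : ℝ) * M^2 := by simp [Finset.sum_const, Finset.card_univ]
  calc Real.sqrt (∑ i, ((v i : ℝ))^2) ≤ Real.sqrt ((d : ℝ) * M^2) := Real.sqrt_le_sqrt h1
    _ = Real.sqrt d * M := by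
        rw [Real.sqrt_mul (Nat.cast_nonneg d), Real.sqrt_sq hM]

lemma le_enorm_of_bound {d : ℕ} (v β : Fin d → ℤ) (c : ℝ) (hc : 0 ≤ c)
    (h : ∀ i, c * |(β i : ℝ)| ≤ |(v i : ℝ)|) : c * _root_.enorm β ≤ _root_.enorm v := by
  rw [_root_.enorm, _root_.enorm]
  have key : c^2 * ∑ i, ((β i : ℝ))^2 ≤ ∑ i, ((v i : ℝ))^2 := by
    rw [Finset.mul_sum]
    refine Finset.sum_le_sum (fun i _ => ?_)
    have hi := h i
    nlinarith [abs_nonneg ((β i : ℝ)), sq_abs ((β i : ℝ)), sq_abs ((v i : ℝ)),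
      mul_nonneg hc (abs_nonneg ((β i : ℝ)))]
  calc c * Real.sqrt (∑ i, ((β i : ℝ))^2)
      = Real.sqrt (c^2 * ∑ i, ((β i : ℝ))^2) := by
        rw [Real.sqrt_mul (sq_nonneg c), Real.sqrt_sq hc]
    _ ≤ Real.sqrt (∑ i, ((v i : ℝ))^2) := Real.sqrt_le_sqrt key

lemma summable_int_aux {r : ℝ} (hr : 1 < r) :
    Summable (fun n : ℤ => ((1:ℝ) + |(n : ℝ)|) ^ (-r)) := by
  have hnat : Summable (fun n : ℕ => ((1:ℝ) + n) ^ (-r)) := by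
    have h := (Real.summable_nat_rpow (p := -r)).2 (by linarith)
    have h2 := h.comp_injective (fun a b hab => Nat.succ_injective hab :
      Function.Injective Nat.succ)
    refine h2.congr (fun n => ?_)
    simp only [Function.comp_apply, Nat.succ_eq_add_one]
    push_cast
    ring_nf
  refine Summable.of_nat_of_neg (hnat.congr fun n => ?_) (hnat.congr fun n => ?_) <;> simp

lemma summable_prod_aux {r : ℝ} (hr : 1 < r) (n : ℕ) :
    Summable (fun γ : Fin n → ℤ => ∏ i, ((1:ℝ) + |(γ i : ℝ)|) ^ (-r)) := by
  induction n with
  | zero => exact Summable.of_finite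
  | succ n ih =>
    have h1 : (0:ℤ → ℝ) ≤ fun n : ℤ => ((1:ℝ) + |(n : ℝ)|) ^ (-r) := fun x => by positivity
    have h2 : (0:(Fin n → ℤ) → ℝ) ≤ fun γ : Fin n → ℤ => ∏ i, ((1:ℝ) + |(γ i : ℝ)|) ^ (-r) :=
      fun x => Finset.prod_nonneg fun i _ => by positivity
    have key : Summable (fun p : ℤ × (Fin n → ℤ) =>
        ((1:ℝ) + |(p.1 : ℝ)|) ^ (-r) * ∏ i, ((1:ℝ) + |(p.2 i : ℝ)|) ^ (-r)) :=
      Summable.mul_of_nonneg (f := fun n : ℤ => ((1:ℝ) + |(n : ℝ)|) ^ (-r))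
        (g := fun γ : Fin n → ℤ => ∏ i, ((1:ℝ) + |(γ i : ℝ)|) ^ (-r))
        (summable_int_aux hr) ih h1 h2
    refine (key.comp_injective
      ((Fin.consEquiv (fun _ : Fin (n+1) => ℤ)).symm).injective).congr (fun γ => ?_)
    rw [Fin.prod_univ_succ]
    simp only [Function.comp_apply, Fin.consEquiv, Equiv.coe_fn_symm_mk, Fin.tail]

lemma summable_enorm_rpow {d : ℕ} (hd : 1 ≤ d) {s : ℝ} (hs : (d:ℝ) < s) :
    Summable (fun γ : Fin d → ℤ => _root_.enorm γ ^ (-s)) := by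
  have hd0 : (0:ℝ) < d := by exact_mod_cast Nat.lt_of_lt_of_le Nat.zero_lt_one hd
  set r := s / d with hrdef
  have hr : 1 < r := (one_lt_div hd0).2 hs
  have hs0 : 0 < s := lt_trans hd0 hs
  have hr0 : 0 < r := lt_trans one_pos hr
  have hsum := ((summable_prod_aux hr d).mul_left (((2:ℝ)^r)^d))
  refine Summable.of_nonneg_of_le (fun γ => Real.rpow_nonneg (enorm_nonneg' γ) _)
    (fun γ => ?_) hsum
  by_cases hγ : γ = 0
  · subst hγ
    have : _root_.enorm (0 : Fin d → ℤ) = 0 := by simp [_root_.enorm]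
    rw [this, Real.zero_rpow (by linarith : -s ≠ 0)]
    have : (0:ℝ) ≤ ∏ i : Fin d, ((1:ℝ) + |((0 : Fin d → ℤ) i : ℝ)|) ^ (-r) :=
      Finset.prod_nonneg fun i _ => by positivity
    positivity
  · have h1 : 0 < _root_.enorm γ := lattice_enorm_pos hγ
    have key : ∀ i : Fin d, _root_.enorm γ ^ (-r) ≤ (2:ℝ)^r * ((1:ℝ) + |(γ i : ℝ)|) ^ (-r) := by
      intro i
      have h2 : ((1:ℝ) + |(γ i : ℝ)|) / 2 ≤ _root_.enorm γ := by
        have ha := coord_le_enorm γ i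
        have hb := one_le_enorm hγ
        linarith
      have h3 : (0:ℝ) < (1 + |(γ i : ℝ)|) / 2 := by positivity
      have h4 := Real.rpow_le_rpow_of_nonpos h3 h2 (neg_nonpos.2 hr0.le)
      calc _root_.enorm γ ^ (-r) ≤ (((1:ℝ) + |(γ i : ℝ)|) / 2) ^ (-r) := h4
        _ = (2:ℝ)^r * ((1:ℝ) + |(γ i : ℝ)|) ^ (-r) := by
            rw [Real.div_rpow (by positivity) (by norm_num),
              Real.rpow_neg (by norm_num : (0:ℝ) ≤ 2)]
            field_simp
    calc _root_.enorm γ ^ (-s) = ∏ _i : Fin d, _root_.enorm γ ^ (-r) := by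
          rw [Finset.prod_const, Finset.card_univ, Fintype.card_fin,
            ← Real.rpow_natCast (_root_.enorm γ ^ (-r)) d, ← Real.rpow_mul h1.le]
          congr 1
          rw [hrdef]
          field_simp
      _ ≤ ∏ i : Fin d, ((2:ℝ)^r * ((1:ℝ) + |(γ i : ℝ)|) ^ (-r)) :=
          Finset.prod_le_prod (fun i _ => Real.rpow_nonneg h1.le _) (fun i _ => key i)
      _ = ((2:ℝ)^r)^d * ∏ i, ((1:ℝ) + |(γ i : ℝ)|) ^ (-r) := by
          rw [Finset.prod_mul_distrib, Finset.prod_const, Finset.card_univ, Fintype.card_fin]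

lemma enorm_rpow_mono {d : ℕ} {s s₀ : ℝ} (h0 : 0 < s₀) (h : s₀ ≤ s) (γ : Fin d → ℤ) :
    _root_.enorm γ ^ (-s) ≤ _root_.enorm γ ^ (-s₀) := by
  by_cases hγ : γ = 0
  · subst hγ
    have hz : _root_.enorm (0 : Fin d → ℤ) = 0 := by simp [_root_.enorm]
    rw [hz, Real.zero_rpow (by linarith : -s ≠ 0), Real.zero_rpow (by linarith : -s₀ ≠ 0)]
  · exact Real.rpow_le_rpow_of_exponent_le (one_le_enorm hγ) (by linarith)

end helpers

theorem stmt1 (d : ℕ) (hd : 1 ≤ d) (δ : ℝ) (hδ : 0 < δ) :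
    ∃ C : ℝ, 1 ≤ C ∧
      ∀ t ∈ Set.Icc ((d:ℝ)/2 + δ) (1/δ), ∀ q : ℕ, ∀ m ∈ Bqset d q, m ≠ 0 →
        C⁻¹ * (2:ℝ) ^ (-(2*(q:ℝ)*t)) ≤ Mq d q t m - _root_.enorm m ^ (-(2*t)) ∧
          Mq d q t m - _root_.enorm m ^ (-(2*t)) ≤ C * (2:ℝ) ^ (-(2*(q:ℝ)*t)) := by
  classical
  have hd1 : (1:ℝ) ≤ d := by exact_mod_cast hd
  have hd0 : (0:ℝ) < d := by linarith
  set t₀ : ℝ := (d:ℝ)/2 + δ with ht₀def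
  have h2t₀ : (d:ℝ) < 2*t₀ := by rw [ht₀def]; ring_nf; linarith
  have h2t₀pos : (0:ℝ) < 2*t₀ := lt_of_le_of_lt hd0.le h2t₀
  have hZsum : Summable (fun γ : Fin d → ℤ => _root_.enorm γ ^ (-(2*t₀))) :=
    summable_enorm_rpow hd h2t₀
  set Z : ℝ := ∑' γ : Fin d → ℤ, _root_.enorm γ ^ (-(2*t₀)) with hZdef
  have hZ0 : 0 ≤ Z := tsum_nonneg fun γ => Real.rpow_nonneg (enorm_nonneg' γ) _
  set A : ℝ := 2 * Real.sqrt d with hAdef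
  have hA1 : (1:ℝ) ≤ A := by
    have h : (1:ℝ) ≤ Real.sqrt d := Real.one_le_sqrt.2 hd1
    rw [hAdef]; linarith
  have hApow : 0 ≤ A ^ (2/δ) := Real.rpow_nonneg (by linarith) _
  have h2pow : 0 ≤ (2:ℝ) ^ (2/δ) := Real.rpow_nonneg (by norm_num) _
  refine ⟨A ^ (2/δ) + (2:ℝ)^(2/δ) * Z + Z + 1, by nlinarith [mul_nonneg h2pow hZ0], ?_⟩
  rintro t ⟨ht1, ht2⟩ q m hm hm0
  set C : ℝ := A ^ (2/δ) + (2:ℝ)^(2/δ) * Z + Z + 1 with hCdef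
  have ht0 : 0 < t := by rw [ht₀def] at ht1; linarith
  have hst : (d:ℝ) < 2*t := by rw [ht₀def] at ht1; linarith
  have htt₀ : t₀ ≤ t := ht1
  have hδt : 2*t ≤ 2/δ := by
    have h := mul_le_mul_of_nonneg_left ht2 (by norm_num : (0:ℝ) ≤ 2)
    calc 2*t ≤ 2*(1/δ) := h
      _ = 2/δ := by ring
  -- bounds on coordinates of m
  have hmZ : ∀ i, |m i| ≤ 2^(q-1) := by
    intro i
    have h := Finset.mem_Icc.1 ((Fintype.mem_piFinset).1 hm i)
    rw [abs_le]; exact ⟨h.1, by linarith [h.2]⟩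
  have hmR : ∀ i, |(m i : ℝ)| ≤ (2:ℝ)^(q-1) := by
    intro i
    have h := hmZ i
    calc |(m i : ℝ)| = ((|m i| : ℤ) : ℝ) := by push_cast; ring
      _ ≤ (((2:ℤ)^(q-1) : ℤ) : ℝ) := by exact_mod_cast h
      _ = (2:ℝ)^(q-1) := by push_cast; ring
  have hpleR : (2:ℝ)^(q-1) ≤ (2:ℝ)^q := pow_le_pow_right₀ (by norm_num) (Nat.sub_le q 1)
  -- the summand
  set f : (Fin d → ℤ) → ℝ := fun β => _root_.enorm (fun i => m i + 2^q * β i) ^ (-(2*t)) with hfdef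
  have hfnonneg : ∀ β, 0 ≤ f β := fun β => Real.rpow_nonneg (enorm_nonneg' _) _
  have hfsum : Summable f := by
    have hinj : Function.Injective
        (fun β : Fin d → ℤ => (fun i => m i + 2^q * β i : Fin d → ℤ)) := by
      intro a b hab
      funext i
      have h := congrFun hab i
      simp only at h
      have h2 : (2:ℤ)^q ≠ 0 := by positivity
      have h3 : (2:ℤ)^q * a i = 2^q * b i := by linarith
      exact mul_left_cancel₀ h2 h3
    exact (summable_enorm_rpow hd hst).comp_injective hinj
  have hMqf : Mq d q t m = ∑' β, f β := by
    unfold Mq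
    rw [hfdef]
  have hdecomp : Mq d q t m = f 0 + ∑' β, if β = 0 then 0 else f β := by
    rw [hMqf]; exact Summable.tsum_eq_add_tsum_ite hfsum 0
  have hf0 : f 0 = _root_.enorm m ^ (-(2*t)) := by
    have hm0fun : (fun i => m i + 2^q * (0 : Fin d → ℤ) i) = m := by
      funext i; simp
    rw [hfdef]
    show _root_.enorm (fun i => m i + 2^q * (0 : Fin d → ℤ) i) ^ (-(2*t)) = _root_.enorm m ^ (-(2*t))
    rw [hm0fun]
  set T : ℝ := ∑' β, if β = 0 then 0 else f β with hTdef
  have hTeq : Mq d q t m - _root_.enorm m ^ (-(2*t)) = T := by rw [hdecomp, hf0]; ring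
  have hitenn : ∀ β : Fin d → ℤ, 0 ≤ (if β = 0 then 0 else f β) := fun β => by
    by_cases h : β = 0
    · rw [if_pos h]
    · rw [if_neg h]; exact hfnonneg β
  have hitele : ∀ β : Fin d → ℤ, (if β = 0 then 0 else f β) ≤ f β := fun β => by
    by_cases h : β = 0
    · rw [if_pos h]; exact hfnonneg β
    · rw [if_neg h]
  have hTsum : Summable (fun β : Fin d → ℤ => if β = 0 then 0 else f β) :=
    Summable.of_nonneg_of_le hitenn hitele hfsum
  -- Lower bound
  have hdpos : 0 < d := hd
  set β₀ : Fin d → ℤ := fun i => if i = ⟨0, hdpos⟩ then -1 else 0 with hβ₀def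
  have hβ₀v : β₀ ⟨0, hdpos⟩ = -1 := if_pos rfl
  have hβ₀ne : β₀ ≠ 0 := by
    intro h
    have h0 := congrFun h ⟨0, hdpos⟩
    rw [hβ₀v] at h0
    simp at h0
  set v₀ : Fin d → ℤ := fun i => m i + 2^q * β₀ i with hv₀def
  have hple : (2:ℤ)^(q-1) ≤ 2^q := pow_le_pow_right₀ (by norm_num) (Nat.sub_le q 1)
  have hv₀ne : v₀ ≠ 0 := by
    intro h
    have h0 : m ⟨0, hdpos⟩ + 2^q * β₀ ⟨0, hdpos⟩ = 0 := congrFun h ⟨0, hdpos⟩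
    rw [hβ₀v] at h0
    have hub := (Finset.mem_Icc.1 ((Fintype.mem_piFinset).1 hm ⟨0, hdpos⟩)).2
    linarith
  have hv₀bound : ∀ i, |(v₀ i : ℝ)| ≤ (2:ℝ)^q * 2 := by
    intro i
    have hq0 : (0:ℝ) ≤ (2:ℝ)^q := by positivity
    by_cases hi : i = ⟨0, hdpos⟩
    · have hv : v₀ i = m i - 2^q := by rw [hv₀def]; simp only [hβ₀def, if_pos hi]; ring
      rw [hv]
      have h1 : |(m i : ℝ) - (2:ℝ)^q| ≤ |(m i : ℝ)| + |(2:ℝ)^q| := abs_sub _ _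
      have h2 := hmR i
      have h3 : |(2:ℝ)^q| = (2:ℝ)^q := abs_of_nonneg hq0
      calc |((m i - 2^q : ℤ) : ℝ)| = |(m i : ℝ) - (2:ℝ)^q| := by push_cast; ring_nf
        _ ≤ (2:ℝ)^(q-1) + (2:ℝ)^q := by rw [h3] at h1; linarith
        _ ≤ (2:ℝ)^q * 2 := by linarith [hpleR]
    · have hv : v₀ i = m i := by rw [hv₀def]; simp only [hβ₀def, if_neg hi]; ring
      rw [hv]
      calc |(m i : ℝ)| ≤ (2:ℝ)^(q-1) := hmR i
        _ ≤ (2:ℝ)^q * 2 := by linarith [hpleR, hq0]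
  have hAq : _root_.enorm v₀ ≤ A * (2:ℝ)^q := by
    have h := enorm_le_of_bound v₀ ((2:ℝ)^q * 2) (by positivity) hv₀bound
    rw [hAdef]
    calc _root_.enorm v₀ ≤ Real.sqrt d * ((2:ℝ)^q * 2) := h
      _ = 2 * Real.sqrt d * (2:ℝ)^q := by ring
  have hfβ₀ : A^(-(2*t)) * (2:ℝ)^(-(2*(q:ℝ)*t)) ≤ f β₀ := by
    have h1 : (0:ℝ) < _root_.enorm v₀ := lattice_enorm_pos hv₀ne
    have hfv : f β₀ = _root_.enorm v₀ ^ (-(2*t)) := by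
      rw [hfdef, hv₀def]
    have h3 := Real.rpow_le_rpow_of_nonpos h1 hAq (by linarith : -(2*t) ≤ 0)
    have h4 : (A * (2:ℝ)^q) ^ (-(2*t)) = A^(-(2*t)) * (2:ℝ)^(-(2*(q:ℝ)*t)) := by
      rw [Real.mul_rpow (by linarith) (by positivity),
        ← Real.rpow_natCast (2:ℝ) q, ← Real.rpow_mul (by norm_num : (0:ℝ) ≤ 2)]
      congr 1
      ring
    rw [hfv, ← h4]
    exact h3
  have hCinv : C⁻¹ ≤ A^(-(2*t)) := by
    have e1 : A^(-(2*t)) = (A^(2*t))⁻¹ := Real.rpow_neg (by linarith) _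
    have e2 : A^(2*t) ≤ A^(2/δ) := Real.rpow_le_rpow_of_exponent_le hA1 hδt
    have e3 : 0 < A^(2*t) := Real.rpow_pos_of_pos (by linarith) _
    have e4 : A^(2*t) ≤ C := by
      rw [hCdef]; linarith [mul_nonneg h2pow hZ0, hZ0]
    rw [e1]
    exact inv_anti₀ e3 e4
  have hlow : C⁻¹ * (2:ℝ)^(-(2*(q:ℝ)*t)) ≤ T := by
    have hp2 : (0:ℝ) < (2:ℝ)^(-(2*(q:ℝ)*t)) := Real.rpow_pos_of_pos two_pos _
    have step1 : C⁻¹ * (2:ℝ)^(-(2*(q:ℝ)*t)) ≤ A^(-(2*t)) * (2:ℝ)^(-(2*(q:ℝ)*t)) :=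
      mul_le_mul_of_nonneg_right hCinv hp2.le
    have step2 : f β₀ ≤ T := by
      have h := Summable.le_tsum hTsum β₀ (fun b _ => hitenn b)
      rwa [if_neg hβ₀ne] at h
    linarith [hfβ₀]
  -- Upper bound
  have hupp : T ≤ C * (2:ℝ)^(-(2*(q:ℝ)*t)) := by
    rcases Nat.eq_zero_or_pos q with hq | hq
    · subst hq
      have hexp : (2:ℝ) ^ (-(2*((0:ℕ):ℝ)*t)) = 1 := by
        rw [show -(2*((0:ℕ):ℝ)*t) = 0 by push_cast; ring, Real.rpow_zero]
      rw [hexp, mul_one]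
      have hTle : T ≤ ∑' β, f β := by
        rw [hTdef]
        exact Summable.tsum_le_tsum hitele hTsum hfsum
      have hMq0 : ∑' β, f β = ∑' γ : Fin d → ℤ, _root_.enorm γ ^ (-(2*t)) := by
        have he := Equiv.tsum_eq (Equiv.addLeft m) (fun γ : Fin d → ℤ => _root_.enorm γ ^ (-(2*t)))
        rw [← he]
        refine tsum_congr (fun β => ?_)
        have harg : (fun i => m i + 2^0 * β i) = (Equiv.addLeft m) β := by
          funext i
          simp [Equiv.addLeft]
        rw [hfdef]
        show _root_.enorm (fun i => m i + 2^0 * β i) ^ (-(2*t)) =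
          _root_.enorm ((Equiv.addLeft m) β) ^ (-(2*t))
        rw [harg]
      have hZt : ∑' γ : Fin d → ℤ, _root_.enorm γ ^ (-(2*t)) ≤ Z := by
        rw [hZdef]
        exact Summable.tsum_le_tsum (fun γ => enorm_rpow_mono h2t₀pos (by linarith) γ)
          (summable_enorm_rpow hd hst) hZsum
      have hZC : Z ≤ C := by
        rw [hCdef]; linarith [mul_nonneg h2pow hZ0, hApow]
      linarith [hTle, hMq0 ▸ hTle]
    · have hq1 : 1 ≤ q := hq
      set c : ℝ := ((2:ℝ)^(q-1)) ^ (-(2*t)) with hcdef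
      have hc0 : (0:ℝ) < (2:ℝ)^(q-1) := by positivity
      have hcnn : 0 ≤ c := Real.rpow_nonneg hc0.le _
      have hpt : ∀ β : Fin d → ℤ, (if β = 0 then 0 else f β) ≤ c * _root_.enorm β ^ (-(2*t₀)) := by
        intro β
        by_cases hβ : β = 0
        · rw [if_pos hβ]
          exact mul_nonneg hcnn (Real.rpow_nonneg (enorm_nonneg' _) _)
        · rw [if_neg hβ]
          set v : Fin d → ℤ := fun i => m i + 2^q * β i with hvdef
          have hlb : ∀ i, (2:ℝ)^(q-1) * |(β i:ℝ)| ≤ |(v i:ℝ)| := by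
            intro i
            by_cases hβi : β i = 0
            · rw [hvdef]
              simp only [hβi, mul_zero, add_zero, Int.cast_zero, abs_zero]
              positivity
            · have h1 : (1:ℤ) ≤ |β i| := Int.one_le_abs hβi
              have h2 : |m i| ≤ 2^(q-1) := hmZ i
              have h3 : |(2:ℤ)^q * β i| ≤ |m i + 2^q*β i| + |m i| := by
                have h := abs_sub (m i + 2^q*β i) (m i)
                have he : m i + 2^q*β i - m i = 2^q * β i := by ring
                rwa [he] at h
              have h4 : |(2:ℤ)^q * β i| = 2^q * |β i| := by
                rw [abs_mul, abs_pow]; norm_num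
              have h5 : (2:ℤ)^q = 2^(q-1) * 2 := by
                rw [← pow_succ]
                congr 1
                omega
              have goalZ : (2:ℤ)^(q-1) * |β i| ≤ |m i + 2^q * β i| := by
                nlinarith [mul_nonneg (pow_nonneg (by norm_num : (0:ℤ) ≤ 2) (q-1))
                  (by linarith : (0:ℤ) ≤ |β i| - 1)]
              have hvv : (2:ℤ)^(q-1) * |β i| ≤ |v i| := by rw [hvdef]; exact goalZ
              calc (2:ℝ)^(q-1) * |(β i:ℝ)| = (((2:ℤ)^(q-1) * |β i| : ℤ) : ℝ) := by
                    push_cast; ring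
                _ ≤ ((|v i| : ℤ) : ℝ) := by exact_mod_cast hvv
                _ = |(v i : ℝ)| := by push_cast; ring
          have hle : (2:ℝ)^(q-1) * _root_.enorm β ≤ _root_.enorm v := le_enorm_of_bound v β _ hc0.le hlb
          have hβpos : 0 < _root_.enorm β := lattice_enorm_pos hβ
          have hpos : 0 < (2:ℝ)^(q-1) * _root_.enorm β := mul_pos hc0 hβpos
          have h6 := Real.rpow_le_rpow_of_nonpos hpos hle (by linarith : -(2*t) ≤ 0)
          have h7 : ((2:ℝ)^(q-1) * _root_.enorm β)^(-(2*t)) = c * _root_.enorm β ^ (-(2*t)) := by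
            rw [Real.mul_rpow hc0.le hβpos.le, hcdef]
          have h8 : _root_.enorm β ^ (-(2*t)) ≤ _root_.enorm β ^ (-(2*t₀)) :=
            enorm_rpow_mono h2t₀pos (by linarith) β
          rw [hfdef]
          show _root_.enorm (fun i => m i + 2^q * β i) ^ (-(2*t)) ≤ c * _root_.enorm β ^ (-(2*t₀))
          rw [← hvdef]
          calc _root_.enorm v ^ (-(2*t)) ≤ c * _root_.enorm β ^ (-(2*t)) := by rw [← h7]; exact h6
            _ ≤ c * _root_.enorm β ^ (-(2*t₀)) := mul_le_mul_of_nonneg_left h8 hcnn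
      have hgsum : Summable (fun β : Fin d → ℤ => c * _root_.enorm β ^ (-(2*t₀))) := hZsum.mul_left c
      have hTle : T ≤ c * Z := by
        rw [hTdef, hZdef]
        calc (∑' β, if β = 0 then 0 else f β) ≤ ∑' β : Fin d → ℤ, c * _root_.enorm β ^ (-(2*t₀)) :=
              Summable.tsum_le_tsum hpt hTsum hgsum
          _ = c * ∑' γ : Fin d → ℤ, _root_.enorm γ ^ (-(2*t₀)) := tsum_mul_left
      have hcval : c = (2:ℝ)^(2*t) * (2:ℝ)^(-(2*(q:ℝ)*t)) := by
        rw [hcdef, ← Real.rpow_natCast (2:ℝ) (q-1), ← Real.rpow_mul (by norm_num : (0:ℝ) ≤ 2),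
          ← Real.rpow_add (by norm_num : (0:ℝ) < 2), Nat.cast_sub hq1]
        congr 1
        push_cast
        ring
      have h2t : (2:ℝ)^(2*t) ≤ (2:ℝ)^(2/δ) := Real.rpow_le_rpow_of_exponent_le (by norm_num) hδt
      have hp2 : (0:ℝ) < (2:ℝ)^(-(2*(q:ℝ)*t)) := Real.rpow_pos_of_pos two_pos _
      have hkey : (2:ℝ)^(2*t) * Z ≤ C := by
        rw [hCdef]
        have := mul_le_mul_of_nonneg_right h2t hZ0
        linarith [hApow, hZ0]
      have hfin : c * Z ≤ C * (2:ℝ)^(-(2*(q:ℝ)*t)) := by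
        rw [hcval]
        have h := mul_le_mul_of_nonneg_right hkey hp2.le
        nlinarith [h]
      linarith [hTle, hfin]
  rw [hTeq]
  exact ⟨hlow, hupp⟩
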